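/- Assume ‖A‖₂ < 1 and that F has a unique minimizer x̄ ∈ ℝ^N (i.e., F(x̄) < F(x) for all x ≠ x̄). Then the IRLS iterates converge to it: x^n → x̄ as n → ∞. -/

import Mathlib

open Finset Filter Matrix Topology

/-- Squared Euclidean residual plus generalized sparsity penalty:
`F(x) = ‖Ax - b‖₂² + 2 ∑ₖ λₖ |xₖ|^{qₖ}`. -/
noncomputable def Ffun {M N : ℕ} (A : Matrix (Fin M) (Fin N) ℝ) (b : Fin M → ℝ)
    (lam q : Fin N → ℝ) (x : Fin N → ℝ) : ℝ :=
  (∑ i, (A.mulVec x i - b i) ^ 2) + 2 * ∑ k, lam k * |x k| ^ (q k)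

/-- The surrogate functional `G(x,a,w,ε)`. -/
noncomputable def Gfun {M N : ℕ} (A : Matrix (Fin M) (Fin N) ℝ) (b : Fin M → ℝ)
    (lam q : Fin N → ℝ) (x a w : Fin N → ℝ) (ε : ℝ) : ℝ :=
  (∑ i, (A.mulVec x i - b i) ^ 2) - (∑ i, (A.mulVec (x - a) i) ^ 2)
    + (∑ k, (x k - a k) ^ 2)
    + ∑ k ∈ Finset.univ.filter (fun k => 1 ≤ q k ∧ q k < 2),
        lam k * (q k * w k * ((x k) ^ 2 + ε ^ 2)
          + (2 - q k) * (w k) ^ (q k / (q k - 2)))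
    + ∑ k ∈ Finset.univ.filter (fun k => q k = 2),
        2 * lam k * ((x k) ^ 2 + ε ^ 2) * ((w k) ^ 2 - 2 * w k + 2)

/-- Euclidean (ℓ²) norm on `Fin N → ℝ`. -/
noncomputable def l2 {N : ℕ} (v : Fin N → ℝ) : ℝ :=
  Real.sqrt (∑ k, (v k) ^ 2)

/-- Spectral (ℓ² operator) norm of a matrix. -/
noncomputable def specNorm {M N : ℕ} (A : Matrix (Fin M) (Fin N) ℝ) : ℝ :=
  ‖LinearMap.toContinuousLinearMap (Matrix.toEuclideanLin A)‖

/- ====================  auxiliary machinery  ==================== -/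

lemma sum_mulVec_mul {M N : ℕ} (A : Matrix (Fin M) (Fin N) ℝ) (u : Fin N → ℝ)
    (z : Fin M → ℝ) : ∑ i, A.mulVec u i * z i = ∑ k, u k * Aᵀ.mulVec z k := by
  simp only [Matrix.mulVec, dotProduct, Finset.sum_mul, Finset.mul_sum,
    Matrix.transpose_apply]
  rw [Finset.sum_comm]
  exact Finset.sum_congr rfl fun k _ => Finset.sum_congr rfl fun i _ => by ring

lemma cross_identity {M N : ℕ} (A : Matrix (Fin M) (Fin N) ℝ) (b : Fin M → ℝ)
    (u v : Fin N → ℝ) :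
    (∑ i, (A.mulVec u i - b i) ^ 2) - (∑ i, (A.mulVec v i - b i) ^ 2)
      - (∑ i, (A.mulVec (u - v) i) ^ 2)
    = ∑ k, 2 * ((u k - v k)
        * (Aᵀ.mulVec (A.mulVec v) k - Aᵀ.mulVec b k)) := by
  have huv : ∀ i, A.mulVec (u - v) i = A.mulVec u i - A.mulVec v i := by
    intro i; rw [Matrix.mulVec_sub]; rfl
  have hAtsub : ∀ k, Aᵀ.mulVec (fun i => A.mulVec v i - b i) k
      = Aᵀ.mulVec (A.mulVec v) k - Aᵀ.mulVec b k := by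
    intro k
    have : (fun i => A.mulVec v i - b i) = A.mulVec v - b := rfl
    rw [this, Matrix.mulVec_sub]; rfl
  rw [← Finset.sum_sub_distrib, ← Finset.sum_sub_distrib]
  have step1 : ∀ i, (A.mulVec u i - b i) ^ 2 - (A.mulVec v i - b i) ^ 2
      - (A.mulVec (u - v) i) ^ 2
      = 2 * (A.mulVec (u - v) i * (A.mulVec v i - b i)) := by
    intro i; rw [huv i]; ring
  rw [Finset.sum_congr rfl fun i _ => step1 i, ← Finset.mul_sum,
    sum_mulVec_mul A (u - v) (fun i => A.mulVec v i - b i), Finset.mul_sum]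
  refine Finset.sum_congr rfl fun k _ => ?_
  rw [hAtsub k]
  rfl

lemma sq_sum_mulVec_le {M N : ℕ} (A : Matrix (Fin M) (Fin N) ℝ) (hA : specNorm A < 1)
    (v : Fin N → ℝ) : ∑ i, (A.mulVec v i) ^ 2 ≤ ∑ k, (v k) ^ 2 := by
  set T := LinearMap.toContinuousLinearMap (Matrix.toEuclideanLin A)
  have hv : ∀ (P : ℕ) (u : Fin P → ℝ),
      ‖(WithLp.equiv 2 (Fin P → ℝ)).symm u‖ ^ 2 = ∑ i, (u i) ^ 2 := by
    intro P u
    rw [EuclideanSpace.norm_eq]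
    rw [Real.sq_sqrt (by positivity)]
    simp [sq_abs]
  have h1 : T ((WithLp.equiv 2 (Fin N → ℝ)).symm v)
      = (WithLp.equiv 2 (Fin M → ℝ)).symm (A.mulVec v) := by
    simp [T, LinearMap.coe_toContinuousLinearMap']
  have h2 := T.le_opNorm ((WithLp.equiv 2 (Fin N → ℝ)).symm v)
  rw [h1] at h2
  have h3 : ‖(WithLp.equiv 2 (Fin M → ℝ)).symm (A.mulVec v)‖
      ≤ ‖(WithLp.equiv 2 (Fin N → ℝ)).symm v‖ := by
    refine h2.trans ?_
    have hn : ‖T‖ ≤ 1 := le_of_lt hA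
    nlinarith [norm_nonneg ((WithLp.equiv 2 (Fin N → ℝ)).symm v), norm_nonneg T]
  calc ∑ i, (A.mulVec v i) ^ 2
      = ‖(WithLp.equiv 2 (Fin M → ℝ)).symm (A.mulVec v)‖ ^ 2 := (hv _ _).symm
    _ ≤ ‖(WithLp.equiv 2 (Fin N → ℝ)).symm v‖ ^ 2 :=
        pow_le_pow_left₀ (norm_nonneg _) h3 2
    _ = ∑ k, (v k) ^ 2 := hv _ _

lemma rpow_tangent_concave {p s t : ℝ} (hp0 : 0 < p) (hp1 : p ≤ 1) (hs : 0 < s)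
    (ht : 0 ≤ t) : t ^ p ≤ s ^ p + p * s ^ (p - 1) * (t - s) := by
  have h := Real.geom_mean_le_arith_mean2_weighted (le_of_lt hp0) (by linarith) ht hs.le
    (by ring : p + (1 - p) = 1)
  have hsp : (0:ℝ) < s ^ (p - 1) := Real.rpow_pos_of_pos hs _
  have key : t ^ p * s ^ (1 - p) * s ^ (p - 1) ≤ (p * t + (1 - p) * s) * s ^ (p - 1) :=
    mul_le_mul_of_nonneg_right h hsp.le
  have h1 : s ^ (1 - p) * s ^ (p - 1) = 1 := by
    rw [← Real.rpow_add hs]; norm_num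
  have h2 : s * s ^ (p - 1) = s ^ p := by
    rw [mul_comm, ← Real.rpow_add_one hs.ne']; norm_num
  rw [mul_assoc, h1, mul_one] at key
  calc t ^ p ≤ (p * t + (1 - p) * s) * s ^ (p - 1) := key
    _ = p * s ^ (p - 1) * t + (1 - p) * (s * s ^ (p-1)) := by ring
    _ = s ^ p + p * s ^ (p - 1) * (t - s) := by linear_combination h2

lemma rpow_tangent_convex {r s t : ℝ} (hr : 1 ≤ r) (hs : 0 < s) (ht : 0 ≤ t) :
    s ^ r + r * s ^ (r - 1) * (t - s) ≤ t ^ r := by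
  have hr0 : 0 < r := lt_of_lt_of_le one_pos hr
  have h := rpow_tangent_concave (p := 1/r) (s := s ^ r) (t := t ^ r)
    (by positivity) (by rw [div_le_one hr0]; linarith) (Real.rpow_pos_of_pos hs r)
    (Real.rpow_nonneg ht r)
  have e1 : (t ^ r) ^ (1/r : ℝ) = t := by
    rw [← Real.rpow_mul ht, mul_one_div_cancel hr0.ne', Real.rpow_one]
  have e2 : (s ^ r) ^ (1/r : ℝ) = s := by
    rw [← Real.rpow_mul hs.le, mul_one_div_cancel hr0.ne', Real.rpow_one]
  have e3 : (s ^ r) ^ (1/r - 1 : ℝ) = s ^ (1 - r) := by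
    rw [← Real.rpow_mul hs.le]; congr 1; field_simp
  rw [e1, e2, e3] at h
  have hsr1 : (0:ℝ) < s ^ (r - 1) := Real.rpow_pos_of_pos hs _
  have key := mul_le_mul_of_nonneg_right h (le_of_lt (by positivity : (0:ℝ) < r * s ^ (r-1)))
  have g1 : s ^ (1 - r) * s ^ (r - 1) = 1 := by rw [← Real.rpow_add hs]; norm_num
  have g2 : s * s ^ (r - 1) = s ^ r := by
    rw [mul_comm, ← Real.rpow_add_one hs.ne']; norm_num
  calc s ^ r + r * s ^ (r - 1) * (t - s)
      = t * (r * s ^ (r-1)) + s ^ r - (s * s^(r-1)) * r := by ring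
    _ ≤ (s + 1/r * s^(1-r) * (t^r - s^r)) * (r * s^(r-1)) + s ^ r - (s * s^(r-1)) * r := by
        linarith [key]
    _ = (1/r * r) * (s^(1-r) * s^(r-1)) * (t^r - s^r) + s ^ r := by ring
    _ = t ^ r := by rw [g1, mul_comm (1/r) r, mul_one_div_cancel hr0.ne']; ring

noncomputable def Feps {M N : ℕ} (A : Matrix (Fin M) (Fin N) ℝ) (b : Fin M → ℝ)
    (lam q : Fin N → ℝ) (ε : ℝ) (x : Fin N → ℝ) : ℝ :=
  (∑ i, (A.mulVec x i - b i) ^ 2) + 2 * ∑ k, lam k * ((x k) ^ 2 + ε ^ 2) ^ (q k / 2)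

lemma real_rpow_add_le_add_rpow {a b p : ℝ} (ha : 0 ≤ a) (hb : 0 ≤ b) (hp : 0 ≤ p)
    (hp1 : p ≤ 1) : (a + b) ^ p ≤ a ^ p + b ^ p := by
  have h := NNReal.rpow_add_le_add_rpow (Real.toNNReal a) (Real.toNNReal b) hp hp1
  rw [← NNReal.coe_le_coe] at h
  push_cast [NNReal.coe_rpow, Real.coe_toNNReal a ha, Real.coe_toNNReal b hb] at h
  exact h

lemma abs_rpow_eq_sq_rpow_half {u p : ℝ} : |u| ^ p = (u ^ 2) ^ (p / 2) := by
  rw [show u ^ 2 = |u| ^ (2:ℕ) by rw [sq_abs], ← Real.rpow_natCast |u| 2,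
    ← Real.rpow_mul (abs_nonneg u)]
  congr 1; ring

section
variable {M N : ℕ} (A : Matrix (Fin M) (Fin N) ℝ) (b : Fin M → ℝ) (lam q : Fin N → ℝ)

lemma Ffun_le_Feps (hlam : ∀ k, 0 < lam k) (hq : ∀ k, 1 ≤ q k) (ε : ℝ) (x : Fin N → ℝ) :
    Ffun A b lam q x ≤ Feps A b lam q ε x := by
  unfold Ffun Feps
  have h : ∀ k, lam k * |x k| ^ (q k) ≤ lam k * ((x k) ^ 2 + ε ^ 2) ^ (q k / 2) := by
    intro k
    apply mul_le_mul_of_nonneg_left _ (hlam k).le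
    rw [abs_rpow_eq_sq_rpow_half]
    exact Real.rpow_le_rpow (by positivity) (by nlinarith [sq_nonneg ε]) (by linarith [hq k])
  have := Finset.sum_le_sum (fun k (_ : k ∈ Finset.univ) => h k)
  linarith

lemma Feps_le_Ffun_add (hlam : ∀ k, 0 < lam k) (hq : ∀ k, 1 ≤ q k ∧ q k ≤ 2)
    (ε : ℝ) (x : Fin N → ℝ) :
    Feps A b lam q ε x ≤ Ffun A b lam q x + 2 * ∑ k, lam k * (ε ^ 2) ^ (q k / 2) := by
  unfold Ffun Feps
  have h : ∀ k, lam k * ((x k) ^ 2 + ε ^ 2) ^ (q k / 2)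
      ≤ lam k * |x k| ^ (q k) + lam k * (ε ^ 2) ^ (q k / 2) := by
    intro k
    rw [abs_rpow_eq_sq_rpow_half, ← mul_add]
    apply mul_le_mul_of_nonneg_left _ (hlam k).le
    exact real_rpow_add_le_add_rpow (by positivity) (by positivity)
      (by linarith [(hq k).1]) (by linarith [(hq k).2])
  have := Finset.sum_le_sum (fun k (_ : k ∈ Finset.univ) => h k)
  rw [Finset.sum_add_distrib] at this
  linarith

lemma Feps_nonneg (hlam : ∀ k, 0 < lam k) (ε : ℝ) (x : Fin N → ℝ) :
    0 ≤ Feps A b lam q ε x := by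
  unfold Feps
  have h1 : (0:ℝ) ≤ ∑ i, (A.mulVec x i - b i) ^ 2 := Finset.sum_nonneg fun i _ => sq_nonneg _
  have h2 : (0:ℝ) ≤ ∑ k, lam k * ((x k) ^ 2 + ε ^ 2) ^ (q k / 2) :=
    Finset.sum_nonneg fun k _ => mul_nonneg (hlam k).le (Real.rpow_nonneg (by positivity) _)
  linarith

lemma Feps_mono (hlam : ∀ k, 0 < lam k) (hq : ∀ k, 1 ≤ q k) {ε ε' : ℝ} (h0 : 0 ≤ ε')
    (hle : ε' ≤ ε) (x : Fin N → ℝ) : Feps A b lam q ε' x ≤ Feps A b lam q ε x := by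
  unfold Feps
  have h : ∀ k, lam k * ((x k) ^ 2 + ε' ^ 2) ^ (q k / 2)
      ≤ lam k * ((x k) ^ 2 + ε ^ 2) ^ (q k / 2) := by
    intro k
    apply mul_le_mul_of_nonneg_left _ (hlam k).le
    apply Real.rpow_le_rpow (by positivity) _ (by linarith [hq k])
    nlinarith
  have := Finset.sum_le_sum (fun k (_ : k ∈ Finset.univ) => h k)
  linarith

lemma tendsto_mulVec_comp {P R : ℕ} (B : Matrix (Fin P) (Fin R) ℝ) {u : ℕ → Fin R → ℝ}
    {l : Fin R → ℝ} (h : ∀ k, Tendsto (fun n => u n k) atTop (𝓝 (l k))) (i : Fin P) :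
    Tendsto (fun n => B.mulVec (u n) i) atTop (𝓝 (B.mulVec l i)) := by
  simp only [Matrix.mulVec, dotProduct]
  exact tendsto_finset_sum _ fun k _ => (h k).const_mul _

lemma tendsto_Ffun {u : ℕ → Fin N → ℝ} {l : Fin N → ℝ} (hq : ∀ k, 1 ≤ q k)
    (h : ∀ k, Tendsto (fun n => u n k) atTop (𝓝 (l k))) :
    Tendsto (fun n => Ffun A b lam q (u n)) atTop (𝓝 (Ffun A b lam q l)) := by
  unfold Ffun
  apply Tendsto.add
  · exact tendsto_finset_sum _ fun i _ =>
      (((tendsto_mulVec_comp A h i).sub tendsto_const_nhds).pow 2)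
  · apply Tendsto.const_mul
    apply tendsto_finset_sum _ fun k _ => ?_
    apply Tendsto.const_mul
    have habs : Tendsto (fun n => |u n k|) atTop (𝓝 |l k|) := (h k).abs
    have hca : ContinuousAt (fun t : ℝ => t ^ (q k)) |l k| :=
      Real.continuousAt_rpow_const _ _ (Or.inr (by linarith [hq k]))
    exact hca.tendsto.comp habs

lemma descent_step
    (hAc : ∀ v : Fin N → ℝ, ∑ i, (A.mulVec v i) ^ 2 ≤ ∑ k, (v k) ^ 2)
    (hlam : ∀ k, 0 < lam k) (hq : ∀ k, 1 ≤ q k ∧ q k ≤ 2)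
    (xn xn1 w : Fin N → ℝ) (ε : ℝ) (hε : 0 < ε)
    (hw : ∀ k, w k = ((xn k) ^ 2 + ε ^ 2) ^ ((q k - 2) / 2))
    (hx1 : ∀ k, xn1 k = (1 + lam k * q k * w k)⁻¹
      * (xn k + Aᵀ.mulVec b k - Aᵀ.mulVec (A.mulVec xn) k)) :
    Feps A b lam q ε xn1 + (∑ k, (xn1 k - xn k) ^ 2) ≤ Feps A b lam q ε xn := by
  unfold Feps
  set m : Fin N → ℝ := fun k => lam k * q k * w k with hm_def
  set c : Fin N → ℝ := fun k => xn k + Aᵀ.mulVec b k - Aᵀ.mulVec (A.mulVec xn) k with hc_def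
  have hwpos : ∀ k, 0 < w k := by
    intro k; rw [hw k]; exact Real.rpow_pos_of_pos (by positivity) _
  have hm0 : ∀ k, 0 < m k := fun k =>
    mul_pos (mul_pos (hlam k) (lt_of_lt_of_le one_pos (hq k).1)) (hwpos k)
  have h1m : ∀ k, (0:ℝ) < 1 + m k := fun k => by linarith [hm0 k]
  have hc : ∀ k, (1 + m k) * xn1 k = c k := by
    intro k
    rw [hx1 k, ← mul_assoc, mul_inv_cancel₀ (h1m k).ne', one_mul]
  have E1 : (∑ i, (A.mulVec xn1 i - b i) ^ 2) - (∑ i, (A.mulVec xn i - b i) ^ 2)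
      - (∑ i, (A.mulVec (xn1 - xn) i) ^ 2)
      = ∑ k, 2 * ((xn1 k - xn k) * (xn k - c k)) := by
    rw [cross_identity A b xn1 xn]
    refine Finset.sum_congr rfl fun k _ => ?_
    have h2 : xn k - c k = Aᵀ.mulVec (A.mulVec xn) k - Aᵀ.mulVec b k := by
      rw [hc_def]; ring
    rw [h2]
  have main : ∀ k, 2 * ((xn1 k - xn k) * (xn k - c k))
      + ((xn1 k - xn k) ^ 2 + m k * (xn1 k) ^ 2 + (1 + m k) * (xn k - xn1 k) ^ 2
        - m k * (xn k) ^ 2) = 0 := by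
    intro k
    linear_combination (2 * (xn1 k - xn k)) * hc k
  have h4 : ((∑ i, (A.mulVec xn1 i - b i) ^ 2) - (∑ i, (A.mulVec xn i - b i) ^ 2)
      - (∑ i, (A.mulVec (xn1 - xn) i) ^ 2))
      + ∑ k, ((xn1 k - xn k) ^ 2 + m k * (xn1 k) ^ 2 + (1 + m k) * (xn k - xn1 k) ^ 2
        - m k * (xn k) ^ 2) = 0 := by
    rw [E1, ← Finset.sum_add_distrib]
    exact Finset.sum_eq_zero fun k _ => main k
  have hsplit : ∑ k, ((xn1 k - xn k) ^ 2 + m k * (xn1 k) ^ 2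
        + (1 + m k) * (xn k - xn1 k) ^ 2 - m k * (xn k) ^ 2)
      = (∑ k, (xn1 k - xn k) ^ 2) + (∑ k, m k * (xn1 k) ^ 2)
        + (∑ k, (1 + m k) * (xn k - xn1 k) ^ 2) - (∑ k, m k * (xn k) ^ 2) := by
    rw [Finset.sum_sub_distrib, Finset.sum_add_distrib, Finset.sum_add_distrib]
  have hYoung : ∀ k, 2 * (lam k * ((xn1 k) ^ 2 + ε ^ 2) ^ (q k / 2))
      ≤ m k * (xn1 k) ^ 2 + (m k * ε ^ 2
        + lam k * (2 - q k) * ((xn k) ^ 2 + ε ^ 2) ^ (q k / 2)) := by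
    intro k
    have hs : (0:ℝ) < (xn k) ^ 2 + ε ^ 2 := by positivity
    have ht : (0:ℝ) ≤ (xn1 k) ^ 2 + ε ^ 2 := by positivity
    have htan := rpow_tangent_concave (p := q k / 2) (s := (xn k) ^ 2 + ε ^ 2)
      (t := (xn1 k) ^ 2 + ε ^ 2) (by linarith [(hq k).1]) (by linarith [(hq k).2]) hs ht
    have hwex : w k = ((xn k) ^ 2 + ε ^ 2) ^ (q k / 2 - 1) := by
      rw [hw k]; congr 1; ring
    have hlk := (hlam k).le
    have := mul_le_mul_of_nonneg_left htan (by linarith : (0:ℝ) ≤ 2 * lam k)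
    have hss : ((xn k) ^ 2 + ε ^ 2) * ((xn k) ^ 2 + ε ^ 2) ^ (q k / 2 - 1)
        = ((xn k) ^ 2 + ε ^ 2) ^ (q k / 2) := by
      rw [mul_comm, ← Real.rpow_add_one hs.ne']; norm_num
    calc 2 * (lam k * ((xn1 k) ^ 2 + ε ^ 2) ^ (q k / 2))
        ≤ 2 * lam k * (((xn k) ^ 2 + ε ^ 2) ^ (q k / 2)
          + q k / 2 * ((xn k) ^ 2 + ε ^ 2) ^ (q k / 2 - 1)
            * (((xn1 k) ^ 2 + ε ^ 2) - ((xn k) ^ 2 + ε ^ 2))) := by linarith [this]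
      _ = m k * (xn1 k) ^ 2 + (m k * ε ^ 2
          + lam k * (2 - q k) * ((xn k) ^ 2 + ε ^ 2) ^ (q k / 2)) := by
          rw [hm_def]; simp only []
          rw [hwex]
          linear_combination (-(lam k * q k)) * hss
  have hEq : ∀ k, m k * (xn k) ^ 2 + (m k * ε ^ 2
      + lam k * (2 - q k) * ((xn k) ^ 2 + ε ^ 2) ^ (q k / 2))
      = 2 * (lam k * ((xn k) ^ 2 + ε ^ 2) ^ (q k / 2)) := by
    intro k
    have hs : (0:ℝ) < (xn k) ^ 2 + ε ^ 2 := by positivity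
    have hwex : w k = ((xn k) ^ 2 + ε ^ 2) ^ (q k / 2 - 1) := by
      rw [hw k]; congr 1; ring
    have hss : ((xn k) ^ 2 + ε ^ 2) * ((xn k) ^ 2 + ε ^ 2) ^ (q k / 2 - 1)
        = ((xn k) ^ 2 + ε ^ 2) ^ (q k / 2) := by
      rw [mul_comm, ← Real.rpow_add_one hs.ne']; norm_num
    rw [hm_def]; simp only []
    rw [hwex]
    linear_combination (lam k * q k) * hss
  have hYoungS : 2 * ∑ k, lam k * ((xn1 k) ^ 2 + ε ^ 2) ^ (q k / 2)
      ≤ (∑ k, m k * (xn1 k) ^ 2) + ∑ k, (m k * ε ^ 2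
        + lam k * (2 - q k) * ((xn k) ^ 2 + ε ^ 2) ^ (q k / 2)) := by
    rw [Finset.mul_sum, ← Finset.sum_add_distrib]
    exact Finset.sum_le_sum fun k _ => hYoung k
  have hEqS : (∑ k, m k * (xn k) ^ 2) + (∑ k, (m k * ε ^ 2
      + lam k * (2 - q k) * ((xn k) ^ 2 + ε ^ 2) ^ (q k / 2)))
      = 2 * ∑ k, lam k * ((xn k) ^ 2 + ε ^ 2) ^ (q k / 2) := by
    rw [Finset.mul_sum, ← Finset.sum_add_distrib]
    exact Finset.sum_congr rfl fun k _ => hEq k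
  have hSA : (∑ i, (A.mulVec (xn1 - xn) i) ^ 2) ≤ ∑ k, (xn1 k - xn k) ^ 2 := by
    have := hAc (xn1 - xn)
    simpa using this
  have hT : (∑ k, (xn1 k - xn k) ^ 2) ≤ ∑ k, (1 + m k) * (xn k - xn1 k) ^ 2 := by
    refine Finset.sum_le_sum fun k _ => ?_
    have := hm0 k
    nlinarith [sq_nonneg (xn k - xn1 k)]
  rw [hsplit] at h4
  linarith [hYoungS, hEqS, hSA, hT, h4]

end

theorem stmt_16 {M N : ℕ} (A : Matrix (Fin M) (Fin N) ℝ) (hA : specNorm A < 1)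
    (b : Fin M → ℝ) (lam q : Fin N → ℝ)
    (hlam : ∀ k, 0 < lam k) (hq : ∀ k, 1 ≤ q k ∧ q k ≤ 2)
    (x : ℕ → Fin N → ℝ) (eps : ℕ → ℝ) (w : ℕ → Fin N → ℝ)
    (α : ℝ) (hα0 : 0 < α) (hα1 : α < 1) (heps0 : 0 < eps 0)
    (hw : ∀ n k, w n k = ((x n k) ^ 2 + (eps n) ^ 2) ^ ((q k - 2) / 2))
    (hxiter : ∀ n k, x (n + 1) k =
      (1 + lam k * q k * w n k)⁻¹
        * (x n k + Aᵀ.mulVec b k - Aᵀ.mulVec (A.mulVec (x n)) k))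
    (hepsiter : ∀ n, eps (n + 1) =
      min (eps n) (Real.sqrt (l2 (x (n + 1) - x n) + α ^ (n + 1))))
    (xbar : Fin N → ℝ)
    (hunique : ∀ y : Fin N → ℝ, y ≠ xbar →
      Ffun A b lam q xbar < Ffun A b lam q y) :
    Tendsto x atTop (nhds xbar) := by
  classical
  have hq1 : ∀ k, 1 ≤ q k := fun k => (hq k).1
  have hq0 : ∀ k, 0 < q k := fun k => lt_of_lt_of_le one_pos (hq k).1
  have hAc : ∀ v : Fin N → ℝ, ∑ i, (A.mulVec v i) ^ 2 ≤ ∑ k, (v k) ^ 2 :=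
    sq_sum_mulVec_le A hA
  -- positivity and monotonicity of eps
  have hl2nonneg : ∀ v : Fin N → ℝ, 0 ≤ l2 v := fun v => Real.sqrt_nonneg _
  have hepspos : ∀ n, 0 < eps n := by
    intro n
    induction n with
    | zero => exact heps0
    | succ n ih =>
        rw [hepsiter n]
        refine lt_min ih (Real.sqrt_pos.mpr ?_)
        have h1 := hl2nonneg (x (n+1) - x n)
        have h2 : (0:ℝ) < α ^ (n+1) := pow_pos hα0 _
        linarith
  have hepsmono : ∀ n, eps (n+1) ≤ eps n := fun n => by
    rw [hepsiter n]; exact min_le_left _ _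
  -- successive differences
  set e : ℕ → ℝ := fun n => ∑ k, (x (n+1) k - x n k) ^ 2 with he_def
  have he0 : ∀ n, 0 ≤ e n := fun n => Finset.sum_nonneg fun k _ => sq_nonneg _
  set D : ℕ → ℝ := fun n => Feps A b lam q (eps n) (x n) with hD_def
  have hD0 : ∀ n, 0 ≤ D n := fun n => Feps_nonneg A b lam q hlam _ _
  have hdes : ∀ n, D (n+1) + e n ≤ D n := by
    intro n
    have h1 := descent_step A b lam q hAc hlam hq (x n) (x (n+1)) (w n) (eps n)
      (hepspos n) (fun k => hw n k) (fun k => hxiter n k)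
    have h2 : Feps A b lam q (eps (n+1)) (x (n+1)) ≤ Feps A b lam q (eps n) (x (n+1)) :=
      Feps_mono A b lam q hlam hq1 (hepspos (n+1)).le (hepsmono n) _
    simp only [hD_def]
    have h3 : e n = ∑ k, (x (n+1) k - x n k) ^ 2 := rfl
    rw [h3]
    linarith
  have hDanti : Antitone D := antitone_nat_of_succ_le fun n => by
    have := hdes n; have := he0 n; linarith
  have hsum_e : ∀ m, (∑ n ∈ Finset.range m, e n) + D m ≤ D 0 := by
    intro m
    induction m with
    | zero => simp
    | succ m ih =>
        rw [Finset.sum_range_succ]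
        have := hdes m
        linarith
  have hesum : Summable e := by
    apply summable_of_sum_range_le he0
    intro m
    have := hsum_e m
    have := hD0 m
    linarith
  have he_to0 : Tendsto e atTop (𝓝 0) := hesum.tendsto_atTop_zero
  have hsqrte_to0 : Tendsto (fun n => Real.sqrt (e n)) atTop (𝓝 0) := by
    have := (Real.continuous_sqrt.continuousAt (x := (0:ℝ))).tendsto.comp he_to0
    simpa [Function.comp_def] using this
  have hdiffbound : ∀ n k, |x (n+1) k - x n k| ≤ Real.sqrt (e n) := by
    intro n k
    rw [← Real.sqrt_sq_eq_abs]
    apply Real.sqrt_le_sqrt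
    exact Finset.single_le_sum (f := fun k => (x (n+1) k - x n k) ^ 2)
      (fun k _ => sq_nonneg _) (Finset.mem_univ k)
  have hdiff_to0 : ∀ k, Tendsto (fun n => x (n+1) k - x n k) atTop (𝓝 0) := by
    intro k
    apply squeeze_zero_norm (fun n => hdiffbound n k) hsqrte_to0
  -- l2 of difference
  have hl2e : ∀ n, l2 (x (n+1) - x n) = Real.sqrt (e n) := by
    intro n; unfold l2; rfl
  -- eps tends to 0
  have heps_to0 : Tendsto eps atTop (𝓝 0) := by
    have hαpow : Tendsto (fun n : ℕ => α ^ (n+1)) atTop (𝓝 0) := by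
      have h0 : Tendsto (fun n : ℕ => α ^ n) atTop (𝓝 0) :=
        tendsto_pow_atTop_nhds_zero_of_lt_one hα0.le hα1
      exact h0.comp (tendsto_add_atTop_nat 1)
    have hupper : Tendsto (fun n => Real.sqrt (Real.sqrt (e n) + α ^ (n+1))) atTop (𝓝 0) := by
      have hsum : Tendsto (fun n => Real.sqrt (e n) + α ^ (n+1)) atTop (𝓝 0) := by
        have := hsqrte_to0.add hαpow
        simpa using this
      have := (Real.continuous_sqrt.continuousAt (x := (0:ℝ))).tendsto.comp hsum
      simpa [Function.comp_def] using this
    have hshift : Tendsto (fun n => eps (n+1)) atTop (𝓝 0) := by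
      apply tendsto_of_tendsto_of_tendsto_of_le_of_le (g := fun _ => (0:ℝ)) (h := fun n => Real.sqrt (Real.sqrt (e n) + α ^ (n+1))) tendsto_const_nhds hupper
      · intro n; exact (hepspos (n+1)).le
      · intro n
        dsimp only
        rw [hepsiter n, hl2e n]
        exact min_le_right _ _
    exact (tendsto_add_atTop_iff_nat 1).mp hshift
  -- uniform bound on iterates
  set B := D 0 with hB_def
  have hBnn : 0 ≤ B := hD0 0
  set R : ℝ := ∑ k, (B / (2 * lam k)) ^ ((1:ℝ) / q k) with hR_def
  have hRk_nonneg : ∀ k, 0 ≤ (B / (2 * lam k)) ^ ((1:ℝ) / q k) := by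
    intro k; exact Real.rpow_nonneg (div_nonneg hBnn (le_of_lt (by have h := hlam k; linarith : (0:ℝ) < 2 * lam k))) _
  have hRnn : 0 ≤ R := Finset.sum_nonneg fun k _ => hRk_nonneg k
  have hxbound : ∀ n k, |x n k| ≤ R := by
    intro n k
    have h1 : 2 * (lam k * |x n k| ^ (q k)) ≤ D n := by
      have h2 : Ffun A b lam q (x n) ≤ D n := Ffun_le_Feps A b lam q hlam hq1 _ _
      unfold Ffun at h2
      have h3 : (0:ℝ) ≤ ∑ i, (A.mulVec (x n) i - b i) ^ 2 :=
        Finset.sum_nonneg fun i _ => sq_nonneg _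
      have h4 : lam k * |x n k| ^ (q k) ≤ ∑ j, lam j * |x n j| ^ (q j) :=
        Finset.single_le_sum (f := fun j => lam j * |x n j| ^ (q j))
          (fun j _ => mul_nonneg (hlam j).le (Real.rpow_nonneg (abs_nonneg _) _))
          (Finset.mem_univ k)
      linarith
    have h5 : |x n k| ^ (q k) ≤ B / (2 * lam k) := by
      rw [le_div_iff₀ (by linarith [hlam k] : (0:ℝ) < 2 * lam k)]
      have h6 : D n ≤ B := hDanti (Nat.zero_le n)
      nlinarith [h1]
    have h7 : |x n k| ≤ (B / (2 * lam k)) ^ ((1:ℝ) / q k) := by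
      have h8 : (|x n k| ^ (q k)) ^ ((1:ℝ) / q k) ≤ (B / (2 * lam k)) ^ ((1:ℝ) / q k) :=
        Real.rpow_le_rpow (Real.rpow_nonneg (abs_nonneg _) _) h5 (by have := hq0 k; positivity)
      rwa [← Real.rpow_mul (abs_nonneg _), mul_one_div_cancel (hq0 k).ne', Real.rpow_one] at h8
    exact h7.trans (Finset.single_le_sum (f := fun k => (B / (2 * lam k)) ^ ((1:ℝ)/q k))
      (fun j _ => hRk_nonneg j) (Finset.mem_univ k))
  have hxball : ∀ n, x n ∈ Metric.closedBall (0 : Fin N → ℝ) R := by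
    intro n
    rw [Metric.mem_closedBall, dist_zero_right]
    rw [pi_norm_le_iff_of_nonneg hRnn]
    intro k
    simpa using hxbound n k
  -- infinitely many strict decreases of eps
  have hdropinf : ∀ m : ℕ, ∃ n, m ≤ n ∧ eps (n+1) < eps n := by
    intro m
    by_contra hcon
    push_neg at hcon
    have hconst : ∀ n, m ≤ n → eps n = eps m := by
      intro n hn
      induction n, hn using Nat.le_induction with
      | base => rfl
      | succ n hmn ih =>
          have h1 := hcon n hmn
          have h2 := hepsmono n
          have : eps (n+1) = eps n := le_antisymm h2 h1
          rw [this, ih]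
    have htend : Tendsto eps atTop (𝓝 (eps m)) :=
      tendsto_atTop_of_eventually_const hconst
    have h0 := tendsto_nhds_unique htend heps_to0
    exact absurd h0 (ne_of_gt (hepspos m))
  have hfreq : ∃ᶠ n in atTop, eps (n+1) < eps n := by
    rw [frequently_atTop]
    intro a; obtain ⟨n, h1, h2⟩ := hdropinf a; exact ⟨n, h1, h2⟩
  obtain ⟨ψ, hψmono, hψdrop⟩ := extraction_of_frequently_atTop hfreq
  obtain ⟨xstar, -, θ, hθmono, hθtend⟩ :=
    tendsto_subseq_of_bounded Metric.isBounded_closedBall (fun j => hxball (ψ j))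
  set φ : ℕ → ℕ := fun j => ψ (θ j) with hφ_def
  have hφmono : StrictMono φ := hψmono.comp hθmono
  have hφatTop : Tendsto φ atTop atTop := hφmono.tendsto_atTop
  have hφdrop : ∀ j, eps (φ j + 1) < eps (φ j) := fun j => hψdrop (θ j)
  have hxtend : Tendsto (fun j => x (φ j)) atTop (𝓝 xstar) := hθtend
  have hxk : ∀ k, Tendsto (fun j => x (φ j) k) atTop (𝓝 (xstar k)) :=
    fun k => tendsto_pi_nhds.mp hxtend k
  have hepsφ : Tendsto (fun j => eps (φ j)) atTop (𝓝 0) := heps_to0.comp hφatTop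
  have hx1k : ∀ k, Tendsto (fun j => x (φ j + 1) k) atTop (𝓝 (xstar k)) := by
    intro k
    have h1 : Tendsto (fun j => x (φ j + 1) k - x (φ j) k) atTop (𝓝 0) :=
      (hdiff_to0 k).comp hφatTop
    have h2 := h1.add (hxk k)
    rw [zero_add] at h2
    refine h2.congr fun j => by ring
  -- quantitative bound at drop times
  have hdq : ∀ j, Real.sqrt (e (φ j)) ≤ (eps (φ j)) ^ 2 := by
    intro j
    have hlt := hφdrop j
    rw [hepsiter (φ j)] at hlt
    have hslt : Real.sqrt (l2 (x (φ j + 1) - x (φ j)) + α ^ (φ j + 1)) < eps (φ j) := by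
      rcases min_lt_iff.mp hlt with h | h
      · exact absurd h (lt_irrefl _)
      · exact h
    have h2 : l2 (x (φ j + 1) - x (φ j)) + α ^ (φ j + 1) < (eps (φ j)) ^ 2 :=
      (Real.sqrt_lt' (hepspos (φ j))).mp hslt
    have h3 := hl2e (φ j)
    have h4 : (0:ℝ) < α ^ (φ j + 1) := pow_pos hα0 _
    linarith
  -- residual map and limits
  set rr : (Fin N → ℝ) → Fin N → ℝ :=
    fun v k => Aᵀ.mulVec b k - Aᵀ.mulVec (A.mulVec v) k with hrr_def
  have hrrtend : ∀ k, Tendsto (fun j => rr (x (φ j)) k) atTop (𝓝 (rr xstar k)) := by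
    intro k
    apply Tendsto.const_sub
    exact tendsto_mulVec_comp Aᵀ (fun i => tendsto_mulVec_comp A hxk i) k
  have hwpos : ∀ n k, 0 < w n k := by
    intro n k
    rw [hw n k]
    have := hepspos n
    exact Real.rpow_pos_of_pos (by positivity) _
  have hiter2 : ∀ n k, lam k * q k * w n k * x (n+1) k
      = x n k - x (n+1) k + rr (x n) k := by
    intro n k
    have hm : (0:ℝ) < lam k * q k * w n k :=
      mul_pos (mul_pos (hlam k) (hq0 k)) (hwpos n k)
    have hpos : (0:ℝ) < 1 + lam k * q k * w n k := by linarith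
    have hcc : (1 + lam k * q k * w n k) * x (n+1) k = x n k + rr (x n) k := by
      rw [hxiter n k, ← mul_assoc, mul_inv_cancel₀ hpos.ne', one_mul]
      simp only [hrr_def]
      ring
    linear_combination hcc
  have hmxlim : ∀ k, Tendsto (fun j => lam k * q k * w (φ j) k * x (φ j + 1) k)
      atTop (𝓝 (rr xstar k)) := by
    intro k
    have h1 : (fun j => lam k * q k * w (φ j) k * x (φ j + 1) k)
        = fun j => x (φ j) k - x (φ j + 1) k + rr (x (φ j)) k := by
      funext j; exact hiter2 (φ j) k
    rw [h1]
    have h2 := ((hxk k).sub (hx1k k)).add (hrrtend k)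
    simpa using h2
  -- stationarity inequality, coordinatewise
  have hstat : ∀ k (u : ℝ), rr xstar k * (u - xstar k)
      ≤ lam k * (|u| ^ q k - |xstar k| ^ q k) := by
    intro k u
    rcases eq_or_lt_of_le (hq k).2 with hq2 | hqlt2
    · -- q k = 2
      have hw1 : ∀ n, w n k = 1 := by
        intro n
        rw [hw n k, hq2, show ((2:ℝ)-2)/2 = 0 by norm_num, Real.rpow_zero]
      have hlim1 : Tendsto (fun j => lam k * q k * w (φ j) k * x (φ j + 1) k)
          atTop (𝓝 (lam k * q k * xstar k)) := by
        simp only [hw1, mul_one]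
        exact (hx1k k).const_mul _
      have heq : rr xstar k = lam k * q k * xstar k :=
        tendsto_nhds_unique (hmxlim k) hlim1
      have habs : ∀ t : ℝ, |t| ^ (q k) = t ^ 2 := by
        intro t
        rw [hq2, show ((2:ℝ)) = ((2:ℕ):ℝ) by norm_num, Real.rpow_natCast, sq_abs]
      rw [heq, habs, habs, hq2]
      nlinarith [sq_nonneg (u - xstar k), hlam k]
    · by_cases hx0 : xstar k = 0
      · -- q k < 2, xstar k = 0
        have hsq12 : ∀ j, |lam k * q k * w (φ j) k * x (φ j + 1) k|
            ≤ lam k * q k * (((x (φ j) k)^2 + (eps (φ j))^2) ^ ((q k - 1)/2)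
                + ((eps (φ j))^2) ^ (q k / 2)) := by
          intro j
          have hepsj := hepspos (φ j)
          have hspos : (0:ℝ) < (x (φ j) k)^2 + (eps (φ j))^2 := by positivity
          have heps2pos : (0:ℝ) < (eps (φ j))^2 := by positivity
          have hwv : w (φ j) k = ((x (φ j) k)^2 + (eps (φ j))^2) ^ ((q k - 2)/2) := hw (φ j) k
          have hwnn : 0 ≤ w (φ j) k := (hwpos (φ j) k).le
          have hlqnn : (0:ℝ) ≤ lam k * q k := mul_nonneg (hlam k).le (hq0 k).le
          have htri : |x (φ j + 1) k| ≤ |x (φ j) k| + Real.sqrt (e (φ j)) := by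
            have h1 := hdiffbound (φ j) k
            calc |x (φ j + 1) k| = |x (φ j) k + (x (φ j + 1) k - x (φ j) k)| := by ring_nf
              _ ≤ |x (φ j) k| + |x (φ j + 1) k - x (φ j) k| := abs_add_le _ _
              _ ≤ |x (φ j) k| + Real.sqrt (e (φ j)) := by linarith
          have hw_xn : w (φ j) k * |x (φ j) k|
              ≤ ((x (φ j) k)^2 + (eps (φ j))^2) ^ ((q k - 1)/2) := by
            have h1 : |x (φ j) k| ≤ ((x (φ j) k)^2 + (eps (φ j))^2) ^ ((1:ℝ)/2) := by
              rw [← Real.sqrt_eq_rpow, ← Real.sqrt_sq_eq_abs]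
              apply Real.sqrt_le_sqrt
              nlinarith [sq_nonneg (eps (φ j))]
            calc w (φ j) k * |x (φ j) k|
                ≤ w (φ j) k * (((x (φ j) k)^2 + (eps (φ j))^2) ^ ((1:ℝ)/2)) :=
                  mul_le_mul_of_nonneg_left h1 hwnn
              _ = ((x (φ j) k)^2 + (eps (φ j))^2) ^ ((q k - 1)/2) := by
                  rw [hwv, ← Real.rpow_add hspos]; congr 1; ring
          have hw_d : w (φ j) k * Real.sqrt (e (φ j)) ≤ ((eps (φ j))^2) ^ (q k / 2) := by
            have h1 : w (φ j) k ≤ ((eps (φ j))^2) ^ ((q k - 2)/2) := by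
              rw [hwv]
              exact Real.rpow_le_rpow_of_nonpos heps2pos
                (by nlinarith [sq_nonneg (x (φ j) k)]) (by linarith)
            have h2 : Real.sqrt (e (φ j)) ≤ (eps (φ j))^2 := hdq j
            have h3 : 0 ≤ Real.sqrt (e (φ j)) := Real.sqrt_nonneg _
            calc w (φ j) k * Real.sqrt (e (φ j))
                ≤ ((eps (φ j))^2) ^ ((q k - 2)/2) * (eps (φ j))^2 :=
                  mul_le_mul h1 h2 h3 (Real.rpow_nonneg heps2pos.le _)
              _ = ((eps (φ j))^2) ^ (q k/2) := by
                  rw [← Real.rpow_add_one heps2pos.ne']; congr 1; ring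
          calc |lam k * q k * w (φ j) k * x (φ j + 1) k|
              = lam k * q k * (w (φ j) k * |x (φ j + 1) k|) := by
                rw [abs_mul, abs_of_nonneg (mul_nonneg hlqnn hwnn), mul_assoc]
            _ ≤ lam k * q k * (w (φ j) k * (|x (φ j) k| + Real.sqrt (e (φ j)))) := by
                exact mul_le_mul_of_nonneg_left
                  (mul_le_mul_of_nonneg_left htri hwnn) hlqnn
            _ = lam k * q k * (w (φ j) k * |x (φ j) k|
                  + w (φ j) k * Real.sqrt (e (φ j))) := by ring
            _ ≤ lam k * q k * (((x (φ j) k)^2 + (eps (φ j))^2) ^ ((q k - 1)/2)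
                  + ((eps (φ j))^2) ^ (q k / 2)) := by
                exact mul_le_mul_of_nonneg_left (by linarith [hw_xn, hw_d]) hlqnn
        rcases eq_or_lt_of_le (hq k).1 with hq1e | hq1lt
        · -- q k = 1
          have hbound : ∀ j, |lam k * q k * w (φ j) k * x (φ j + 1) k|
              ≤ lam k * (1 + eps (φ j)) := by
            intro j
            have h := hsq12 j
            have h1 : (((x (φ j) k)^2 + (eps (φ j))^2) : ℝ) ^ ((q k - 1)/2) = 1 := by
              rw [← hq1e, show ((1:ℝ)-1)/2 = 0 by norm_num, Real.rpow_zero]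
            have h2 : (((eps (φ j))^2) : ℝ) ^ (q k / 2) = eps (φ j) := by
              rw [← hq1e, ← Real.sqrt_eq_rpow, Real.sqrt_sq (hepspos _).le]
            rw [h1, h2, ← hq1e] at h
            calc |lam k * q k * w (φ j) k * x (φ j + 1) k|
                ≤ lam k * q k * (1 + eps (φ j)) := hsq12 j |>.trans (by rw [h1, h2])
              _ = lam k * (1 + eps (φ j)) := by rw [← hq1e, mul_one]
          have hrabs : |rr xstar k| ≤ lam k := by
            have hf : Tendsto (fun j => |lam k * q k * w (φ j) k * x (φ j + 1) k|)
                atTop (𝓝 |rr xstar k|) := (hmxlim k).abs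
            have hg : Tendsto (fun j => lam k * (1 + eps (φ j)))
                atTop (𝓝 (lam k * (1 + 0))) :=
              (tendsto_const_nhds.add hepsφ).const_mul _
            have h3 := le_of_tendsto_of_tendsto hf hg
              (Filter.Eventually.of_forall hbound)
            simpa using h3
          rw [hx0]
          simp only [sub_zero, abs_zero, Real.zero_rpow (ne_of_gt (hq0 k)), sub_zero]
          rw [← hq1e, Real.rpow_one]
          calc rr xstar k * u ≤ |rr xstar k * u| := le_abs_self _
            _ = |rr xstar k| * |u| := abs_mul _ _
            _ ≤ lam k * |u| := mul_le_mul_of_nonneg_right hrabs (abs_nonneg u)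
        · -- 1 < q k
          have hzero : rr xstar k = 0 := by
            have hsj : Tendsto (fun j => (x (φ j) k)^2 + (eps (φ j))^2) atTop (𝓝 0) := by
              have h1 := ((hxk k).pow 2).add (hepsφ.pow 2)
              rw [hx0] at h1
              simpa using h1
            have hsj1 : Tendsto (fun j => ((x (φ j) k)^2 + (eps (φ j))^2) ^ ((q k - 1)/2))
                atTop (𝓝 0) := by
              have hca : ContinuousAt (fun t : ℝ => t ^ ((q k - 1)/2)) 0 :=
                Real.continuousAt_rpow_const _ _ (Or.inr (by linarith))
              have h1 := hca.tendsto.comp hsj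
              simpa [Function.comp_def, Real.zero_rpow (ne_of_gt (show (0:ℝ) < (q k - 1)/2 by linarith))]
                using h1
            have hsj2 : Tendsto (fun j => ((eps (φ j))^2) ^ (q k / 2)) atTop (𝓝 0) := by
              have heps2 : Tendsto (fun j => (eps (φ j))^2) atTop (𝓝 0) := by
                have h1 := hepsφ.pow 2
                simpa using h1
              have hca : ContinuousAt (fun t : ℝ => t ^ (q k / 2)) 0 :=
                Real.continuousAt_rpow_const _ _ (Or.inr (by linarith [hq0 k]))
              have h1 := hca.tendsto.comp heps2
              simpa [Function.comp_def, Real.zero_rpow (ne_of_gt (show (0:ℝ) < q k / 2 by linarith [hq0 k]))]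
                using h1
            have hblim : Tendsto (fun j => lam k * q k
                * (((x (φ j) k)^2 + (eps (φ j))^2) ^ ((q k - 1)/2)
                  + ((eps (φ j))^2) ^ (q k/2))) atTop (𝓝 0) := by
              have h1 := (hsj1.add hsj2).const_mul (lam k * q k)
              simpa using h1
            have h0 : Tendsto (fun j => lam k * q k * w (φ j) k * x (φ j + 1) k)
                atTop (𝓝 0) := squeeze_zero_norm hsq12 hblim
            exact tendsto_nhds_unique (hmxlim k) h0
          rw [hzero, hx0]
          simp only [abs_zero, Real.zero_rpow (ne_of_gt (hq0 k)), sub_zero, zero_mul]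
          exact mul_nonneg (hlam k).le (Real.rpow_nonneg (abs_nonneg u) _)
      · -- xstar k ≠ 0
        have habs0 : 0 < |xstar k| := abs_pos.mpr hx0
        have hwlim : Tendsto (fun j => w (φ j) k)
            atTop (𝓝 ((xstar k ^ 2) ^ ((q k - 2)/2))) := by
          have hsj : Tendsto (fun j => (x (φ j) k)^2 + (eps (φ j))^2)
              atTop (𝓝 (xstar k ^ 2)) := by
            have h1 := ((hxk k).pow 2).add (hepsφ.pow 2)
            simpa using h1
          have hca : ContinuousAt (fun t : ℝ => t ^ ((q k - 2)/2)) (xstar k ^ 2) :=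
            Real.continuousAt_rpow_const _ _ (Or.inl (pow_ne_zero 2 hx0))
          have h1 := hca.tendsto.comp hsj
          refine h1.congr fun j => ?_
          exact (hw (φ j) k).symm
        have heq : rr xstar k = lam k * q k * ((xstar k ^ 2) ^ ((q k - 2)/2)) * xstar k := by
          have h1 : Tendsto (fun j => lam k * q k * w (φ j) k * x (φ j + 1) k)
              atTop (𝓝 (lam k * q k * ((xstar k ^2) ^ ((q k - 2)/2)) * xstar k)) :=
            (hwlim.const_mul (lam k * q k)).mul (hx1k k)
          exact tendsto_nhds_unique (hmxlim k) h1
        set s0 := |xstar k| with hs0_def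
        have hrw : (xstar k ^ 2) ^ ((q k - 2)/2) = s0 ^ (q k - 2) := by
          rw [show xstar k ^ 2 = s0 ^ (2:ℕ) by rw [hs0_def, sq_abs],
            ← Real.rpow_natCast s0 2, ← Real.rpow_mul habs0.le]
          congr 1; push_cast; ring
        have htangent := rpow_tangent_convex (r := q k) (s := s0) (t := |u|)
          (hq1 k) habs0 (abs_nonneg u)
        have e2 : s0 ^ (q k - 2) * xstar k ^ 2 = s0 ^ q k := by
          rw [show xstar k ^ 2 = s0 ^ (2:ℕ) by rw [hs0_def, sq_abs],
            ← Real.rpow_natCast s0 2, ← Real.rpow_add habs0]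
          congr 1; push_cast; ring
        have e3 : s0 ^ (q k - 2) * s0 = s0 ^ (q k - 1) := by
          rw [← Real.rpow_add_one habs0.ne']; congr 1; ring
        have e4 : s0 ^ (q k - 1) * s0 = s0 ^ q k := by
          rw [← Real.rpow_add_one habs0.ne']; congr 1; ring
        have hmain : q k * s0 ^ (q k - 2) * xstar k * (u - xstar k)
            ≤ |u| ^ q k - s0 ^ q k := by
          have e1 : s0 ^ (q k - 2) * (xstar k * u) ≤ s0 ^ (q k - 2) * (s0 * |u|) := by
            apply mul_le_mul_of_nonneg_left _ (Real.rpow_nonneg habs0.le _)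
            calc xstar k * u ≤ |xstar k * u| := le_abs_self _
              _ = s0 * |u| := by rw [abs_mul]
          have step1 : q k * (s0 ^ (q k - 2) * (xstar k * u))
              ≤ q k * (s0 ^ (q k - 2) * (s0 * |u|)) :=
            mul_le_mul_of_nonneg_left e1 (hq0 k).le
          have expand : q k * s0 ^ (q k - 2) * xstar k * (u - xstar k)
              = q k * (s0 ^ (q k - 2) * (xstar k * u))
                - q k * (s0 ^ (q k - 2) * xstar k ^ 2) := by ring
          have h5 : q k * (s0 ^ (q k - 2) * (s0 * |u|)) = q k * s0 ^ (q k - 1) * |u| := by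
            rw [show s0 ^ (q k - 2) * (s0 * |u|) = (s0 ^ (q k - 2) * s0) * |u| by ring, e3]
            ring
          have h6 : q k * (s0 ^ (q k - 2) * xstar k ^ 2) = q k * s0 ^ q k := by rw [e2]
          have h7 : q k * s0 ^ (q k - 1) * (|u| - s0)
              = q k * s0 ^ (q k - 1) * |u| - q k * s0 ^ q k := by
            rw [← e4]; ring
          linarith [step1, htangent, expand, h5, h6, h7]
        rw [heq, hrw]
        calc lam k * q k * s0 ^ (q k - 2) * xstar k * (u - xstar k)
            = lam k * (q k * s0 ^ (q k - 2) * xstar k * (u - xstar k)) := by ring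
          _ ≤ lam k * (|u| ^ q k - s0 ^ q k) :=
              mul_le_mul_of_nonneg_left hmain (hlam k).le
  -- xstar is a global minimizer of Ffun
  have hglobal : ∀ y : Fin N → ℝ, Ffun A b lam q xstar ≤ Ffun A b lam q y := by
    intro y
    have hcross := cross_identity A b y xstar
    have hSA : (0:ℝ) ≤ ∑ i, (A.mulVec (y - xstar) i) ^ 2 :=
      Finset.sum_nonneg fun i _ => sq_nonneg _
    have hsum : 0 ≤ ∑ k, (2 * ((y k - xstar k)
        * (Aᵀ.mulVec (A.mulVec xstar) k - Aᵀ.mulVec b k))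
        + 2 * (lam k * (|y k| ^ q k - |xstar k| ^ q k))) := by
      apply Finset.sum_nonneg
      intro k _
      have h1 := hstat k (y k)
      have h2 : Aᵀ.mulVec (A.mulVec xstar) k - Aᵀ.mulVec b k = - rr xstar k := by
        simp only [hrr_def]; ring
      rw [h2]
      linarith
    rw [Finset.sum_add_distrib] at hsum
    have hS2 : ∑ k, 2 * (lam k * (|y k| ^ q k - |xstar k| ^ q k))
        = 2 * (∑ k, lam k * |y k| ^ q k) - 2 * ∑ k, lam k * |xstar k| ^ q k := by
      have hp : ∀ k ∈ Finset.univ, 2 * (lam k * (|y k| ^ q k - |xstar k| ^ q k))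
          = 2 * (lam k * |y k| ^ q k) - 2 * (lam k * |xstar k| ^ q k) :=
        fun k _ => by ring
      rw [Finset.sum_congr rfl hp, Finset.sum_sub_distrib,
        ← Finset.mul_sum, ← Finset.mul_sum]
    unfold Ffun
    linarith [hcross, hSA, hsum, hS2]
  have hxstar_eq : xstar = xbar := by
    by_contra hne
    exact absurd (hglobal xbar) (not_le.mpr (hunique xstar hne))
  -- limit of the descent sequence
  have hDbdd : BddBelow (Set.range D) := by
    refine ⟨0, ?_⟩
    rintro v ⟨n, rfl⟩
    exact hD0 n
  have hDlim : Tendsto D atTop (𝓝 (⨅ n, D n)) := tendsto_atTop_ciInf hDanti hDbdd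
  set L := ⨅ n, D n with hL_def
  have hcorr0 : Tendsto (fun j => ∑ k, lam k * (((eps (φ j))^2) : ℝ) ^ (q k / 2))
      atTop (𝓝 0) := by
    have h1 : ∀ k : Fin N, Tendsto (fun j => lam k * (((eps (φ j))^2):ℝ) ^ (q k/2))
        atTop (𝓝 0) := by
      intro k
      have heps2 : Tendsto (fun j => (eps (φ j))^2) atTop (𝓝 0) := by
        simpa using hepsφ.pow 2
      have hca : ContinuousAt (fun t : ℝ => t ^ (q k/2)) 0 :=
        Real.continuousAt_rpow_const _ _ (Or.inr (by linarith [hq0 k]))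
      have h2 := (hca.tendsto.comp heps2).const_mul (lam k)
      simpa [Real.zero_rpow (ne_of_gt (show (0:ℝ) < q k/2 by linarith [hq0 k]))] using h2
    have h3 := tendsto_finset_sum (Finset.univ : Finset (Fin N)) (fun k _ => h1 k)
    simpa using h3
  have hDφ : Tendsto (fun j => D (φ j)) atTop (𝓝 L) := hDlim.comp hφatTop
  have hFφ : Tendsto (fun j => Ffun A b lam q (x (φ j))) atTop
      (𝓝 (Ffun A b lam q xstar)) := tendsto_Ffun A b lam q hq1 hxk
  have hLeq : L = Ffun A b lam q xbar := by
    have hle1 : Ffun A b lam q xstar ≤ L :=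
      le_of_tendsto_of_tendsto hFφ hDφ (Filter.Eventually.of_forall fun j =>
        Ffun_le_Feps A b lam q hlam hq1 (eps (φ j)) (x (φ j)))
    have hcomb : Tendsto (fun j => Ffun A b lam q (x (φ j))
        + 2 * ∑ k, lam k * (((eps (φ j))^2):ℝ) ^ (q k / 2)) atTop
        (𝓝 (Ffun A b lam q xstar)) := by
      have h4 := hFφ.add (hcorr0.const_mul 2)
      simpa using h4
    have hle2 : L ≤ Ffun A b lam q xstar :=
      le_of_tendsto_of_tendsto hDφ hcomb (Filter.Eventually.of_forall fun j =>
        Feps_le_Ffun_add A b lam q hlam hq (eps (φ j)) (x (φ j)))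
    rw [← hxstar_eq]
    exact le_antisymm hle2 hle1
  -- conclusion by contradiction
  by_contra hnot
  rw [Metric.tendsto_atTop] at hnot
  push_neg at hnot
  obtain ⟨δ, hδpos, hbad⟩ := hnot
  have hfreq2 : ∃ᶠ n in atTop, δ ≤ dist (x n) xbar := by
    rw [frequently_atTop]
    intro a; obtain ⟨n, h1, h2⟩ := hbad a; exact ⟨n, h1, h2⟩
  obtain ⟨ψ2, hψ2mono, hψ2dist⟩ := extraction_of_frequently_atTop hfreq2
  obtain ⟨x', -, θ2, hθ2mono, hθ2tend⟩ :=
    tendsto_subseq_of_bounded Metric.isBounded_closedBall (fun j => hxball (ψ2 j))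
  have hx2tend : Tendsto (fun j => x (ψ2 (θ2 j))) atTop (𝓝 x') := hθ2tend
  have hx2k : ∀ k, Tendsto (fun j => x (ψ2 (θ2 j)) k) atTop (𝓝 (x' k)) :=
    fun k => tendsto_pi_nhds.mp hx2tend k
  have hF2 : Ffun A b lam q x' ≤ L := by
    have hf := tendsto_Ffun A b lam q hq1 hx2k
    have hg : Tendsto (fun j => D (ψ2 (θ2 j))) atTop (𝓝 L) :=
      hDlim.comp (hψ2mono.comp hθ2mono).tendsto_atTop
    exact le_of_tendsto_of_tendsto hf hg (Filter.Eventually.of_forall fun j =>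
      Ffun_le_Feps A b lam q hlam hq1 (eps (ψ2 (θ2 j))) (x (ψ2 (θ2 j))))
  have hx'eq : x' = xbar := by
    by_contra hne
    have h1 := hunique x' hne
    rw [hLeq] at hF2
    linarith
  have hdist : δ ≤ dist x' xbar := by
    have hdt : Tendsto (fun j => dist (x (ψ2 (θ2 j))) xbar) atTop (𝓝 (dist x' xbar)) :=
      hx2tend.dist tendsto_const_nhds
    exact ge_of_tendsto hdt (Filter.Eventually.of_forall fun j => hψ2dist (θ2 j))
  rw [hx'eq, dist_self] at hdist
  linarith
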